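/- Let v = (1 + i)/√2. Then for all a, b in the binary tetrahedral group 𝐓 one has re(a * v * star b) ≤ 1/√2, with equality when a = b = 1. Consequently, the distance in the orbit space of S³ under the action q ↦ a·q·b⁻¹ (a, b ∈ 𝐓) between the orbit of 1 and the orbit of v is exactly π/4, so the diameter of S³/(𝐓/𝐓; 𝐓/𝐓) is at least π/4. -/

import Mathlib

open Quaternion Real

noncomputable section

/-- The quaternion `i`. -/
def qi : ℍ[ℝ] := ⟨0, 1, 0, 0⟩
/-- The quaternion `j`. -/
def qj : ℍ[ℝ] := ⟨0, 0, 1, 0⟩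
/-- The quaternion `k`. -/
def qk : ℍ[ℝ] := ⟨0, 0, 0, 1⟩

/-- The binary tetrahedral group `𝐓 = {±1, ±i, ±j, ±k} ∪ {(±1 ± i ± j ± k)/2}`. -/
def binT : Set ℍ[ℝ] :=
  ({1, -1, qi, -qi, qj, -qj, qk, -qk} : Set ℍ[ℝ]) ∪
    {q | ∃ s₁ s₂ s₃ s₄ : ℝ, (s₁ = 1 ∨ s₁ = -1) ∧ (s₂ = 1 ∨ s₂ = -1) ∧
      (s₃ = 1 ∨ s₃ = -1) ∧ (s₄ = 1 ∨ s₄ = -1) ∧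
      q = (⟨s₁ / 2, s₂ / 2, s₃ / 2, s₄ / 2⟩ : ℍ[ℝ])}

/-- The unit quaternion `v = (1 + i)/√2`. -/
def vT : ℍ[ℝ] := ⟨1 / Real.sqrt 2, 1 / Real.sqrt 2, 0, 0⟩

/-- Any two coordinates of an element of `binT` have absolute values summing to at most 1. -/
lemma binT_pairs {a : ℍ[ℝ]} (ha : a ∈ binT) :
    |a.re| + |a.imI| ≤ 1 ∧ |a.re| + |a.imJ| ≤ 1 ∧ |a.re| + |a.imK| ≤ 1 ∧
    |a.imI| + |a.imJ| ≤ 1 ∧ |a.imI| + |a.imK| ≤ 1 ∧ |a.imJ| + |a.imK| ≤ 1 := by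
  rcases ha with ha | ha
  · simp only [Set.mem_insert_iff, Set.mem_singleton_iff] at ha
    rcases ha with rfl|rfl|rfl|rfl|rfl|rfl|rfl|rfl <;>
      norm_num [↓Quaternion.re_neg, ↓Quaternion.imI_neg, ↓Quaternion.imJ_neg, ↓Quaternion.imK_neg, qi, qj, qk]
  · obtain ⟨s₁, s₂, s₃, s₄, hs₁, hs₂, hs₃, hs₄, rfl⟩ := ha
    rcases hs₁ with rfl|rfl <;> rcases hs₂ with rfl|rfl <;>
      rcases hs₃ with rfl|rfl <;> rcases hs₄ with rfl|rfl <;> norm_num [abs_div]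

/-- The key real-part formula. -/
lemma re_aux (a b : ℍ[ℝ]) :
    (a * vT * star b).re = (a.re*(b.re+b.imI) + a.imI*(b.imI-b.re)
      + a.imJ*(b.imJ-b.imK) + a.imK*(b.imK+b.imJ)) / Real.sqrt 2 := by
  have h2 : Real.sqrt 2 ≠ 0 := by positivity
  have hs : Real.sqrt 2 * Real.sqrt 2 = 2 := Real.mul_self_sqrt (by norm_num)
  simp only [Quaternion.re_mul, Quaternion.re_star, Quaternion.imI_star,
    Quaternion.imJ_star, Quaternion.imK_star, Quaternion.imI_mul,
    Quaternion.imJ_mul, Quaternion.imK_mul]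
  simp only [vT]
  field_simp
  linear_combination (0 : ℝ) * hs

/-- The main inequality. -/
lemma binT_bound : ∀ a ∈ binT, ∀ b ∈ binT,
    (a * vT * star b).re ≤ 1 / Real.sqrt 2 := by
  intro a ha b hb
  obtain ⟨h1, h2, h3, h4, h5, h6⟩ := binT_pairs ha
  rw [re_aux]
  have hpos : (0:ℝ) < Real.sqrt 2 := by positivity
  rw [div_le_div_iff₀ hpos hpos, mul_le_mul_iff_left₀ hpos]
  have lre1 := le_abs_self a.re
  have lre2 := neg_abs_le a.re
  have li1 := le_abs_self a.imI
  have li2 := neg_abs_le a.imI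
  have lj1 := le_abs_self a.imJ
  have lj2 := neg_abs_le a.imJ
  have lk1 := le_abs_self a.imK
  have lk2 := neg_abs_le a.imK
  rcases hb with hb | hb
  · simp only [Set.mem_insert_iff, Set.mem_singleton_iff] at hb
    rcases hb with rfl|rfl|rfl|rfl|rfl|rfl|rfl|rfl <;>
      simp only [Quaternion.re_one, Quaternion.imI_one, Quaternion.imJ_one,
        Quaternion.imK_one, ↓Quaternion.re_neg, ↓Quaternion.imI_neg,
        ↓Quaternion.imJ_neg, ↓Quaternion.imK_neg, qi, qj, qk] <;> linarith
  · obtain ⟨s₁, s₂, s₃, s₄, hs₁, hs₂, hs₃, hs₄, rfl⟩ := hb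
    rcases hs₁ with rfl|rfl <;> rcases hs₂ with rfl|rfl <;>
      rcases hs₃ with rfl|rfl <;> rcases hs₄ with rfl|rfl <;>
      norm_num <;> linarith

lemma norm_vT : ‖vT‖ = 1 := by
  have h : Quaternion.normSq vT = 1 := by
    rw [Quaternion.normSq_def', vT]; simp [div_pow, Real.sq_sqrt (by norm_num : (0:ℝ) ≤ 2)]
    norm_num
  have h2 := Quaternion.normSq_eq_norm_mul_self vT
  nlinarith [norm_nonneg vT]

lemma arccos_inv_sqrt_two : Real.arccos (1 / Real.sqrt 2) = π / 4 := by
  have hs : Real.sqrt 2 * Real.sqrt 2 = 2 := Real.mul_self_sqrt (by norm_num)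
  have h : (1:ℝ) / Real.sqrt 2 = Real.cos (π/4) := by
    rw [Real.cos_pi_div_four]
    field_simp
    rw [Real.sq_sqrt (by norm_num)]
  rw [h, Real.arccos_cos (by positivity) (by linarith [pi_pos])]

lemma one_mem_binT : (1 : ℍ[ℝ]) ∈ binT := Or.inl (by simp)

lemma re_one_vT : ((1 : ℍ[ℝ]) * vT * star (1 : ℍ[ℝ])).re = 1 / Real.sqrt 2 := by
  simp [Quaternion.re_mul]; simp [vT]

/-- arccos is antitone. -/
lemma arccos_antitone : Antitone Real.arccos := by
  intro x y h
  unfold Real.arccos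
  have := Real.monotone_arcsin h
  linarith

lemma sInf_eq : sInf {t : ℝ | ∃ a ∈ binT, ∃ b ∈ binT,
    t = Real.arccos ((a * vT * star b).re)} = π / 4 := by
  have hmem : π / 4 ∈ {t : ℝ | ∃ a ∈ binT, ∃ b ∈ binT,
      t = Real.arccos ((a * vT * star b).re)} := by
    exact ⟨1, one_mem_binT, 1, one_mem_binT, by rw [re_one_vT, arccos_inv_sqrt_two]⟩
  have hlb : ∀ t ∈ {t : ℝ | ∃ a ∈ binT, ∃ b ∈ binT,
      t = Real.arccos ((a * vT * star b).re)}, π / 4 ≤ t := by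
    rintro t ⟨a, ha, b, hb, rfl⟩
    calc π / 4 = Real.arccos (1 / Real.sqrt 2) := arccos_inv_sqrt_two.symm
    _ ≤ Real.arccos ((a * vT * star b).re) := arccos_antitone (binT_bound a ha b hb)
  exact le_antisymm (csInf_le ⟨π / 4, hlb⟩ hmem) (le_csInf ⟨_, hmem⟩ hlb)

/-- For `v = (1+i)/√2`: `re(a·v·b⁻¹) ≤ 1/√2` for all `a, b ∈ 𝐓`, with
equality at `a = b = 1`; hence the distance between the orbits of `1` and `v` under the
group `(𝐓/𝐓; 𝐓/𝐓)` is exactly `π/4`, and the diameter of `S³/(𝐓/𝐓; 𝐓/𝐓)` is at least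
`π/4`. -/
theorem binaryTetrahedral_product_vertex_distance :
    (∀ a ∈ binT, ∀ b ∈ binT, (a * vT * star b).re ≤ 1 / Real.sqrt 2) ∧
    ((1 : ℍ[ℝ]) * vT * star (1 : ℍ[ℝ])).re = 1 / Real.sqrt 2 ∧
    sInf {t : ℝ | ∃ a ∈ binT, ∃ b ∈ binT,
        t = Real.arccos ((a * vT * star b).re)} = π / 4 ∧
    sSup {d : ℝ | ∃ x y : ℍ[ℝ], ‖x‖ = 1 ∧ ‖y‖ = 1 ∧
        d = sInf {t : ℝ | ∃ a ∈ binT, ∃ b ∈ binT,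
          t = Real.arccos ((a * x * star b * star y).re)}} ≥ π / 4 := by
  refine ⟨binT_bound, re_one_vT, sInf_eq, ?_⟩
  have hmem : π / 4 ∈ {d : ℝ | ∃ x y : ℍ[ℝ], ‖x‖ = 1 ∧ ‖y‖ = 1 ∧
      d = sInf {t : ℝ | ∃ a ∈ binT, ∃ b ∈ binT,
        t = Real.arccos ((a * x * star b * star y).re)}} := by
    refine ⟨vT, 1, norm_vT, norm_one, ?_⟩
    rw [← sInf_eq]
    congr 1
    ext t
    simp [mul_one]
  have hbdd : BddAbove {d : ℝ | ∃ x y : ℍ[ℝ], ‖x‖ = 1 ∧ ‖y‖ = 1 ∧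
      d = sInf {t : ℝ | ∃ a ∈ binT, ∃ b ∈ binT,
        t = Real.arccos ((a * x * star b * star y).re)}} := by
    refine ⟨π, ?_⟩
    rintro d ⟨x, y, hx, hy, rfl⟩
    have hne : Real.arccos ((1 * x * star (1:ℍ[ℝ]) * star y).re) ∈
        {t : ℝ | ∃ a ∈ binT, ∃ b ∈ binT,
          t = Real.arccos ((a * x * star b * star y).re)} :=
      ⟨1, one_mem_binT, 1, one_mem_binT, rfl⟩
    have hbl : BddBelow {t : ℝ | ∃ a ∈ binT, ∃ b ∈ binT,
        t = Real.arccos ((a * x * star b * star y).re)} := by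
      refine ⟨0, ?_⟩
      rintro t ⟨a, ha, b, hb, rfl⟩
      exact Real.arccos_nonneg _
    exact le_trans (csInf_le hbl hne) (Real.arccos_le_pi _)
  exact le_csSup hbdd hmem

end
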